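/- arXiv:1406.1440 — 4 statements merged into one kernel-verified Lean document; each statement's English description precedes it below -/
import Mathlib

section
/- For any real numbers a > 0 and z, the integral over s from 0 to infinity of (1/sqrt(2*pi*s)) * exp(-z^2/(2s)) * (a^2/2) * exp(-a^2 * s / 2) ds equals (a/2) * exp(-a*|z|). -/
open MeasureTheory Real Set

lemma glasser (α β : ℝ) (hα : 0 < α) (hβ : 0 < β) :
    ∫ t in Set.Ioi (0:ℝ), Real.exp (-(α*t - β/t)^2) = Real.sqrt Real.pi / (2*α) := by
  set G : ℝ → ℝ := fun t => α*t - β/t with hG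
  have hderiv : ∀ t ∈ Ioi (0:ℝ), HasDerivWithinAt G (α + β/t^2) (Ioi 0) t := by
    intro t ht
    have ht0 : t ≠ 0 := (mem_Ioi.mp ht).ne'
    have h1 : HasDerivAt (fun t : ℝ => α * t) α t := by
      simpa using (hasDerivAt_id t).const_mul α
    have h2 : HasDerivAt (fun t : ℝ => β / t) (-(β / t^2)) t := by
      have := (hasDerivAt_inv ht0).const_mul β
      simpa [div_eq_mul_inv, neg_div, mul_div_assoc] using this
    have := h1.sub h2
    exact (this.congr_deriv (by ring)).hasDerivWithinAt
  have hinj : InjOn G (Ioi 0) := by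
    intro s hs t ht h
    simp only [hG] at h
    have hs0 : (0:ℝ) < s := hs
    have ht0 : (0:ℝ) < t := ht
    have hs' : s ≠ 0 := hs0.ne'
    have ht' : t ≠ 0 := ht0.ne'
    field_simp at h
    have key : (s - t) * (α*s*t + β) = 0 := by linear_combination h
    have hpos : α*s*t + β > 0 := by positivity
    rcases mul_eq_zero.mp key with h3 | h3
    · linarith
    · linarith
  have himg : G '' Ioi 0 = univ := by
    apply eq_univ_of_forall
    intro u
    set D := u^2 + 4*α*β with hD
    have hD0 : 0 ≤ D := by positivity
    have hsq : Real.sqrt D ^ 2 = D := Real.sq_sqrt hD0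
    have habs : |u| < Real.sqrt D := by
      rw [show |u| = Real.sqrt (u^2) by rw [Real.sqrt_sq_eq_abs]]
      apply Real.sqrt_lt_sqrt (sq_nonneg u)
      nlinarith
    set t := (u + Real.sqrt D) / (2*α) with htdef
    have ht0 : 0 < t := by
      apply div_pos _ (by linarith)
      have := neg_abs_le u
      linarith
    refine ⟨t, ht0, ?_⟩
    have key : α * t^2 - u * t - β = 0 := by
      rw [htdef]
      field_simp
      nlinarith [hsq]
    show α * t - β / t = u
    field_simp
    nlinarith [key]
  have hmain : ∫ x, Real.exp (-x^2) = ∫ t in Ioi (0:ℝ), (α + β/t^2) * Real.exp (-(G t)^2) := by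
    have := integral_image_eq_integral_abs_deriv_smul measurableSet_Ioi hderiv hinj
      (fun u => Real.exp (-u^2))
    rw [himg] at this
    rw [← setIntegral_univ, this]
    apply setIntegral_congr_fun measurableSet_Ioi
    intro t ht
    have ht0 : (0:ℝ) < t := ht
    have : |α + β/t^2| = α + β/t^2 := abs_of_pos (by positivity)
    simp [this, smul_eq_mul]
  -- integrability of the integrand
  have hGcont : ContinuousOn G (Ioi (0:ℝ)) := by
    apply ContinuousOn.sub (continuous_const.mul continuous_id).continuousOn
    exact continuousOn_const.div continuousOn_id (fun t ht => ne_of_gt ht)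
  have hcont : ContinuousOn (fun t => Real.exp (-(G t)^2)) (Ioi (0:ℝ)) :=
    Real.continuous_exp.comp_continuousOn ((hGcont.pow 2).neg)
  have hI1 : IntegrableOn (fun t => Real.exp (-(G t)^2)) (Ioi (0:ℝ)) := by
    refine Integrable.mono'
      (((integrable_exp_neg_mul_sq (show (0:ℝ) < α^2 by positivity)).const_mul
        (Real.exp (2*α*β))).restrict (s := Ioi 0))
      (hcont.aestronglyMeasurable measurableSet_Ioi) ?_
    filter_upwards [ae_restrict_mem measurableSet_Ioi] with t ht
    rw [Real.norm_eq_abs, abs_of_pos (Real.exp_pos _), ← Real.exp_add]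
    apply Real.exp_le_exp.mpr
    have ht0 : (0:ℝ) < t := ht
    have h2 : α*t*(β/t) = α*β := by field_simp
    simp only [hG]
    nlinarith [sq_nonneg (β/t), h2]
  -- second substitution t ↦ β/(α t)
  have hd2 : ∀ t ∈ Ioi (0:ℝ), HasDerivWithinAt (fun t => β/(α*t)) (-(β/(α*t^2))) (Ioi 0) t := by
    intro t ht
    have ht0 : t ≠ 0 := (mem_Ioi.mp ht).ne'
    have := (hasDerivAt_inv ht0).const_mul (β/α)
    have heq : (fun t : ℝ => β/α * t⁻¹) = (fun t : ℝ => β/(α*t)) := by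
      funext x; rw [div_mul_eq_div_div]; ring
    rw [heq] at this
    have : HasDerivAt (fun t => β/(α*t)) (-(β/(α*t^2))) t := by
      exact this.congr_deriv (by ring)
    exact this.hasDerivWithinAt
  have hinj2 : InjOn (fun t : ℝ => β/(α*t)) (Ioi 0) := by
    intro s hs t ht h
    have hs0 : (0:ℝ) < s := hs
    have ht0 : (0:ℝ) < t := ht
    simp only at h
    rw [div_eq_div_iff (by positivity) (by positivity)] at h
    have h2 := mul_left_cancel₀ hβ.ne' h
    exact (mul_left_cancel₀ hα.ne' h2).symm
  have himg2 : (fun t : ℝ => β/(α*t)) '' Ioi 0 = Ioi 0 := by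
    ext y
    constructor
    · rintro ⟨x, hx, rfl⟩
      have hx0 : (0:ℝ) < x := hx
      exact mem_Ioi.mpr (by positivity)
    · intro hy
      have hy0 : (0:ℝ) < y := hy
      refine ⟨β/(α*y), mem_Ioi.mpr (by positivity), ?_⟩
      field_simp
  have hGflip : ∀ t ∈ Ioi (0:ℝ), Real.exp (-(G (β/(α*t)))^2) = Real.exp (-(G t)^2) := by
    intro t ht
    have ht0 : (0:ℝ) < t := ht
    congr 1
    have : G (β/(α*t)) = -(G t) := by
      simp only [hG]
      field_simp
      ring
    rw [this, neg_sq]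
  have hsub2 : ∫ t in Ioi (0:ℝ), Real.exp (-(G t)^2)
      = ∫ t in Ioi (0:ℝ), (β/(α*t^2)) * Real.exp (-(G t)^2) := by
    have key := integral_image_eq_integral_abs_deriv_smul measurableSet_Ioi hd2 hinj2
      (fun t => Real.exp (-(G t)^2))
    rw [himg2] at key
    rw [key]
    apply setIntegral_congr_fun measurableSet_Ioi
    intro t ht
    have ht0 : (0:ℝ) < t := ht
    have habs : |(-(β/(α*t^2)))| = β/(α*t^2) := by
      rw [abs_neg]; exact abs_of_pos (by positivity)
    simp only [smul_eq_mul, habs, hGflip t ht]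
  have hI2 : IntegrableOn (fun t => (β/(α*t^2)) * Real.exp (-(G t)^2)) (Ioi (0:ℝ)) := by
    have := (integrableOn_image_iff_integrableOn_abs_deriv_smul measurableSet_Ioi hd2 hinj2
      (fun t => Real.exp (-(G t)^2))).mp (by rwa [himg2])
    apply this.congr_fun _ measurableSet_Ioi
    intro t ht
    have ht0 : (0:ℝ) < t := ht
    have habs : |(-(β/(α*t^2)))| = β/(α*t^2) := by
      rw [abs_neg]; exact abs_of_pos (by positivity)
    simp only [smul_eq_mul, habs, hGflip t ht]
  -- split and conclude
  have hsplit : ∫ t in Ioi (0:ℝ), (α + β/t^2) * Real.exp (-(G t)^2)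
      = α * (∫ t in Ioi (0:ℝ), Real.exp (-(G t)^2))
        + α * (∫ t in Ioi (0:ℝ), (β/(α*t^2)) * Real.exp (-(G t)^2)) := by
    rw [← integral_const_mul, ← integral_const_mul,
      ← integral_add (hI1.const_mul α) ((hI2.const_mul α))]
    apply setIntegral_congr_fun measurableSet_Ioi
    intro t ht
    have ht0 : (0:ℝ) < t := ht
    have hane : α ≠ 0 := hα.ne'
    field_simp
  have hgauss : ∫ x : ℝ, Real.exp (-x^2) = Real.sqrt Real.pi := by
    have := integral_gaussian 1
    simpa using this
  rw [hgauss, hsplit, ← hsub2] at hmain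
  have : Real.sqrt Real.pi = 2 * α * (∫ t in Ioi (0:ℝ), Real.exp (-(G t)^2)) := by
    rw [hmain]; ring
  rw [this]
  exact (mul_div_cancel_left₀ _ (by positivity : (2*α) ≠ 0)).symm

lemma glasserF (α β : ℝ) (hα : 0 < α) (hβ : 0 ≤ β) :
    ∫ t in Set.Ioi (0:ℝ), Real.exp (-(α*t - β/t)^2) = Real.sqrt Real.pi / (2*α) := by
  rcases eq_or_lt_of_le hβ with h | h
  · subst h
    have : ∀ t : ℝ, Real.exp (-(α*t - 0/t)^2) = Real.exp (-(α^2) * t^2) := by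
      intro t; congr 1; rw [zero_div, sub_zero]; ring
    simp only [this]
    rw [integral_gaussian_Ioi (α^2), Real.sqrt_div Real.pi_pos.le, Real.sqrt_sq hα.le]
    ring
  · exact glasser α β hα h

theorem laplace_scale_mixture (a z : ℝ) (ha : 0 < a) :
    ∫ s in Set.Ioi (0 : ℝ),
        (1 / Real.sqrt (2 * Real.pi * s)) * Real.exp (-(z ^ 2) / (2 * s)) *
          (a ^ 2 / 2) * Real.exp (-(a ^ 2) * s / 2)
      = (a / 2) * Real.exp (-(a * |z|)) := by
  have hs2 : Real.sqrt 2 ^ 2 = 2 := Real.sq_sqrt (by norm_num)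
  have hs2pos : (0:ℝ) < Real.sqrt 2 := Real.sqrt_pos.mpr (by norm_num)
  have hsppos : (0:ℝ) < Real.sqrt Real.pi := Real.sqrt_pos.mpr Real.pi_pos
  set α : ℝ := a / Real.sqrt 2 with hαdef
  set β : ℝ := |z| / Real.sqrt 2 with hβdef
  have hα : 0 < α := by positivity
  have hβ : 0 ≤ β := by positivity
  set C : ℝ := a^2 / Real.sqrt (2*Real.pi) * Real.exp (-(a*|z|)) with hCdef
  have h2 := integral_comp_rpow_Ioi_of_pos (p := 2)
    (g := fun s => (1 / Real.sqrt (2 * Real.pi * s)) * Real.exp (-(z ^ 2) / (2 * s)) *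
          (a ^ 2 / 2) * Real.exp (-(a ^ 2) * s / 2)) two_pos
  rw [← h2]
  have hcongr : ∫ x in Set.Ioi (0:ℝ),
      (2 * x ^ ((2:ℝ) - 1)) • ((1 / Real.sqrt (2 * Real.pi * x ^ (2:ℝ))) *
        Real.exp (-(z ^ 2) / (2 * x ^ (2:ℝ))) * (a ^ 2 / 2) *
        Real.exp (-(a ^ 2) * x ^ (2:ℝ) / 2))
      = ∫ x in Set.Ioi (0:ℝ), C * Real.exp (-(α*x - β/x)^2) := by
    apply setIntegral_congr_fun measurableSet_Ioi
    intro x hx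
    have hx0 : (0:ℝ) < x := hx
    have hrp : x ^ ((2:ℝ) - 1) = x := by norm_num
    have hrp2 : x ^ (2:ℝ) = x ^ 2 := by
      rw [show (2:ℝ) = ((2:ℕ):ℝ) by norm_num, Real.rpow_natCast]
    have hsqrt : Real.sqrt (2 * Real.pi * x ^ 2) = Real.sqrt (2 * Real.pi) * x := by
      rw [Real.sqrt_mul (by positivity), Real.sqrt_sq hx0.le]
    have hexpo : -(z ^ 2) / (2 * x ^ 2) + (-(a ^ 2) * x ^ 2 / 2)
        = -(a*|z|) + (-(α*x - β/x)^2) := by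
      have habs : |z|^2 = z^2 := sq_abs z
      have e1 : α^2 = a^2/2 := by rw [hαdef, div_pow, hs2]
      have e2 : β^2 = z^2/2 := by rw [hβdef, div_pow, hs2, habs]
      have e3 : α*β = a*|z|/2 := by
        rw [hαdef, hβdef, div_mul_div_comm, Real.mul_self_sqrt (by norm_num : (0:ℝ) ≤ 2)]
      have e4 : (α*x - β/x)^2 = α^2*x^2 - 2*(α*β) + β^2/x^2 := by
        field_simp
        ring
      rw [e4, e1, e2, e3]
      field_simp
      ring
    simp only [smul_eq_mul, hrp, hrp2, hsqrt]
    rw [hCdef]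
    rw [show (2 * x) * ((1 / (Real.sqrt (2*Real.pi) * x)) * Real.exp (-(z ^ 2) / (2 * x ^ 2)) *
        (a ^ 2 / 2) * Real.exp (-(a ^ 2) * x ^ 2 / 2))
      = (2 * x) * (1 / (Real.sqrt (2*Real.pi) * x)) * (a^2/2) *
          Real.exp (-(z ^ 2) / (2 * x ^ 2) + (-(a ^ 2) * x ^ 2 / 2)) by
        rw [Real.exp_add]; ring]
    rw [hexpo, Real.exp_add]
    have hspi : Real.sqrt (2*Real.pi) ≠ 0 := by positivity
    field_simp
  rw [hcongr, integral_const_mul, glasserF α β hα hβ]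
  rw [hCdef, hαdef]
  have h2pi : Real.sqrt (2*Real.pi) = Real.sqrt 2 * Real.sqrt Real.pi :=
    Real.sqrt_mul (by norm_num) _
  rw [h2pi]
  field_simp
end

section
/- Let X be an m-by-n real matrix with singular value decomposition. For any factorization X = M * N^T with M of size m-by-K and N of size n-by-K (any positive integer K), the nuclear norm of X satisfies ||X||_* <= (||M||_F^2 + ||N||_F^2)/2. -/
open Matrix

/-- The nuclear norm of a real matrix: the sum of its singular values,
i.e. the sum of the square roots of the eigenvalues of `Xᵀ * X`. -/
noncomputable def nuclearNorm {m n : ℕ} (X : Matrix (Fin m) (Fin n) ℝ) : ℝ :=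
  ∑ j, Real.sqrt ((show (Xᵀ * X).IsHermitian by
    simpa [Matrix.conjTranspose_eq_transpose_of_trivial] using
      Matrix.isHermitian_conjTranspose_mul_self X).eigenvalues j)

lemma dot_transpose {m n : ℕ} (X : Matrix (Fin m) (Fin n) ℝ) (c : Fin m → ℝ) (b : Fin n → ℝ) :
    c ⬝ᵥ (X *ᵥ b) = (Xᵀ *ᵥ c) ⬝ᵥ b := by
  rw [mulVec_transpose, dotProduct_mulVec]

lemma dot_self_nonneg {p : ℕ} (a : Fin p → ℝ) : 0 ≤ a ⬝ᵥ a :=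
  Finset.sum_nonneg fun i _ => mul_self_nonneg _

lemma dot_le_half {p : ℕ} (a b : Fin p → ℝ) : a ⬝ᵥ b ≤ (a ⬝ᵥ a + b ⬝ᵥ b) / 2 := by
  have h := dot_self_nonneg (a - b)
  have e : (a - b) ⬝ᵥ (a - b) = a ⬝ᵥ a - 2 * (a ⬝ᵥ b) + b ⬝ᵥ b := by
    simp [sub_dotProduct, dotProduct_sub, dotProduct_comm b a]
    ring
  nlinarith [h, e]

lemma inner_eq_dot {p : ℕ} (x y : EuclideanSpace ℝ (Fin p)) :
    (inner ℝ x y : ℝ) = (⇑x) ⬝ᵥ (⇑y) := by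
  simp [PiLp.inner_apply, dotProduct, mul_comm]

theorem nuclearNorm_le_of_factorization' (m n K : ℕ) (hK : 0 < K)
    (X : Matrix (Fin m) (Fin n) ℝ)
    (M : Matrix (Fin m) (Fin K) ℝ) (N : Matrix (Fin n) (Fin K) ℝ)
    (hX : X = M * Nᵀ) :
    (∑ j, Real.sqrt ((show (Xᵀ * X).IsHermitian by
    simpa [Matrix.conjTranspose_eq_transpose_of_trivial] using
      Matrix.isHermitian_conjTranspose_mul_self X).eigenvalues j))
      ≤ ((∑ i, ∑ k, (M i k) ^ 2) + (∑ j, ∑ k, (N j k) ^ 2)) / 2 := by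
  classical
  set hH := (show (Xᵀ * X).IsHermitian by
    simpa [Matrix.conjTranspose_eq_transpose_of_trivial] using
      Matrix.isHermitian_conjTranspose_mul_self X) with hHdef
  set lam : Fin n → ℝ := hH.eigenvalues with hlamdef
  set v : Fin n → EuclideanSpace ℝ (Fin n) := fun j => hH.eigenvectorBasis j with hvdef
  have hmv : ∀ j, (Xᵀ * X) *ᵥ ⇑(v j) = lam j • ⇑(v j) := fun j =>
    hH.mulVec_eigenvectorBasis j
  have hortho : Orthonormal ℝ v := hH.eigenvectorBasis.orthonormal
  have hvv : ∀ i j, (⇑(v i)) ⬝ᵥ (⇑(v j)) = if i = j then 1 else 0 := by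
    intro i j
    rw [← inner_eq_dot]
    exact orthonormal_iff_ite.mp hortho i j
  have key : ∀ i j, (X *ᵥ ⇑(v i)) ⬝ᵥ (X *ᵥ ⇑(v j)) = if i = j then lam j else 0 := by
    intro i j
    rw [dotProduct_comm, dot_transpose, mulVec_mulVec, hmv j, smul_dotProduct, hvv j i]
    rcases eq_or_ne i j with h | h
    · subst h; simp
    · simp [h, Ne.symm h]
  have hlam0 : ∀ j, 0 ≤ lam j := by
    intro j
    have := key j j
    rw [if_pos rfl] at this
    rw [← this]; exact dot_self_nonneg _
  set σ : Fin n → ℝ := fun j => Real.sqrt (lam j) with hσdef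
  have hσ2 : ∀ j, σ j ^ 2 = lam j := fun j => Real.sq_sqrt (hlam0 j)
  have hσ0 : ∀ j, 0 ≤ σ j := fun j => Real.sqrt_nonneg _
  -- the left singular vectors (as plain functions)
  set uf : Fin n → Fin m → ℝ := fun j => (σ j)⁻¹ • (X *ᵥ ⇑(v j)) with hufdef
  set u : Fin n → EuclideanSpace ℝ (Fin m) := fun j => (WithLp.equiv 2 _).symm (uf j) with hudef
  have hucoe : ∀ j, ⇑(u j) = uf j := fun j => rfl
  have huu : ∀ i j, (uf i) ⬝ᵥ (uf j)
      = (σ i)⁻¹ * ((σ j)⁻¹ * (if i = j then lam j else 0)) := by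
    intro i j
    simp only [hufdef, smul_dotProduct, dotProduct_smul, key i j, smul_eq_mul]
    ring
  -- uf is orthonormal on the support of lam
  have huon : Orthonormal ℝ (fun j : {j : Fin n // lam j ≠ 0} => u j) := by
    rw [orthonormal_iff_ite]
    rintro ⟨i, hi⟩ ⟨j, hj⟩
    rw [inner_eq_dot, hucoe, hucoe, huu i j]
    by_cases h : i = j
    · subst h
      simp only [if_pos rfl, Subtype.mk.injEq]
      have hσne : σ i ≠ 0 := by
        intro h0
        exact hi (by rw [← hσ2 i, h0]; ring)
      rw [← hσ2 i]
      field_simp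
      simp
    · have : (⟨i, hi⟩ : {j : Fin n // lam j ≠ 0}) ≠ ⟨j, hj⟩ := by simpa using h
      simp [h, this]
  -- p and q
  set p : Fin n → Fin K → ℝ := fun j => Mᵀ *ᵥ uf j with hpdef
  set q : Fin n → Fin K → ℝ := fun j => Nᵀ *ᵥ ⇑(v j) with hqdef
  have hstep : ∀ j, σ j = p j ⬝ᵥ q j := by
    intro j
    have h1 : uf j ⬝ᵥ (X *ᵥ ⇑(v j)) = σ j := by
      have hk := key j j
      rw [if_pos rfl] at hk
      simp only [hufdef, smul_dotProduct, hk, smul_eq_mul]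
      rcases eq_or_lt_of_le (hσ0 j) with h | h
      · rw [← hσ2 j, ← h]; ring
      · have hσne : σ j ≠ 0 := ne_of_gt h
        rw [← hσ2 j]; field_simp
    rw [← h1, hX, ← mulVec_mulVec, dot_transpose]
  -- main chain
  have hchain : ∑ j, σ j ≤ ((∑ j, p j ⬝ᵥ p j) + (∑ j, q j ⬝ᵥ q j)) / 2 := by
    calc ∑ j, σ j = ∑ j, p j ⬝ᵥ q j := by simp_rw [hstep]
      _ ≤ ∑ j, ((p j ⬝ᵥ p j) + (q j ⬝ᵥ q j)) / 2 :=
          Finset.sum_le_sum fun j _ => dot_le_half _ _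
      _ = ((∑ j, p j ⬝ᵥ p j) + (∑ j, q j ⬝ᵥ q j)) / 2 := by
          rw [← Finset.sum_add_distrib, Finset.sum_div]
  -- bound the M side
  have hM : (∑ j, p j ⬝ᵥ p j) ≤ ∑ i, ∑ k, (M i k) ^ 2 := by
    -- columns of M as Euclidean vectors
    set c : Fin K → EuclideanSpace ℝ (Fin m) := fun k => (WithLp.equiv 2 _).symm (fun i => M i k)
      with hcdef
    have hpk : ∀ j, p j ⬝ᵥ p j = ∑ k, ‖(inner ℝ (u j) (c k) : ℝ)‖ ^ 2 := by
      intro j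
      simp only [dotProduct, hpdef]
      refine Finset.sum_congr rfl fun k _ => ?_
      rw [inner_eq_dot, hucoe]
      have : (Mᵀ *ᵥ uf j) k = uf j ⬝ᵥ ⇑(c k) := by
        simp only [mulVec, dotProduct, hcdef, transpose_apply,
          WithLp.equiv_symm_apply, PiLp.toLp_apply]
        exact Finset.sum_congr rfl fun i _ => mul_comm _ _
      rw [this, Real.norm_eq_abs, sq_abs, ← pow_two]
    have hzero : ∀ j, lam j = 0 → p j ⬝ᵥ p j = 0 := by
      intro j hj
      have : uf j = 0 := by
        simp [hufdef, hσdef, hj]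
      simp [hpdef, this]
    calc (∑ j, p j ⬝ᵥ p j)
        = ∑ j ∈ Finset.univ.filter (fun j => lam j ≠ 0), p j ⬝ᵥ p j := by
          rw [Finset.sum_filter_of_ne]
          intro j _ h
          by_contra hc
          exact h (hzero j (by simpa using hc))
      _ = ∑ k, ∑ j ∈ Finset.univ.filter (fun j => lam j ≠ 0), ‖(inner ℝ (u j) (c k) : ℝ)‖ ^ 2 := by
          rw [Finset.sum_comm]
          exact Finset.sum_congr rfl fun j _ => hpk j
      _ ≤ ∑ k, ‖c k‖ ^ 2 := by
          refine Finset.sum_le_sum fun k _ => ?_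
          have := huon.sum_inner_products_le (c k) (s := Finset.univ)
          rw [← Finset.sum_subtype (Finset.univ.filter (fun j => lam j ≠ 0))
            (fun j => by simp) (fun j => ‖(inner ℝ (u j) (c k) : ℝ)‖ ^ 2)] at this
          exact this
      _ = ∑ i, ∑ k, (M i k) ^ 2 := by
          rw [Finset.sum_comm]
          refine Finset.sum_congr rfl fun k _ => ?_
          rw [← real_inner_self_eq_norm_sq, inner_eq_dot]
          simp [hcdef, dotProduct, WithLp.equiv_symm_apply, PiLp.toLp_apply, pow_two]
  -- bound the N side
  have hN : (∑ j, q j ⬝ᵥ q j) ≤ ∑ j, ∑ k, (N j k) ^ 2 := by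
    set d : Fin K → EuclideanSpace ℝ (Fin n) := fun k => (WithLp.equiv 2 _).symm (fun i => N i k)
      with hddef
    have hqk : ∀ j, q j ⬝ᵥ q j = ∑ k, ‖(inner ℝ (v j) (d k) : ℝ)‖ ^ 2 := by
      intro j
      simp only [dotProduct, hqdef]
      refine Finset.sum_congr rfl fun k _ => ?_
      rw [inner_eq_dot]
      have : (Nᵀ *ᵥ ⇑(v j)) k = ⇑(v j) ⬝ᵥ ⇑(d k) := by
        simp only [mulVec, dotProduct, hddef, transpose_apply,
          WithLp.equiv_symm_apply, PiLp.toLp_apply]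
        exact Finset.sum_congr rfl fun i _ => mul_comm _ _
      rw [this, Real.norm_eq_abs, sq_abs, ← pow_two]
    calc (∑ j, q j ⬝ᵥ q j)
        = ∑ k, ∑ j, ‖(inner ℝ (v j) (d k) : ℝ)‖ ^ 2 := by
          rw [Finset.sum_comm]
          exact Finset.sum_congr rfl fun j _ => hqk j
      _ ≤ ∑ k, ‖d k‖ ^ 2 :=
          Finset.sum_le_sum fun k _ => hortho.sum_inner_products_le (d k)
      _ = ∑ j, ∑ k, (N j k) ^ 2 := by
          rw [Finset.sum_comm]
          refine Finset.sum_congr rfl fun k _ => ?_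
          rw [← real_inner_self_eq_norm_sq, inner_eq_dot]
          simp [hddef, dotProduct, WithLp.equiv_symm_apply, PiLp.toLp_apply, pow_two]
  calc ∑ j, σ j ≤ ((∑ j, p j ⬝ᵥ p j) + (∑ j, q j ⬝ᵥ q j)) / 2 := hchain
    _ ≤ ((∑ i, ∑ k, (M i k) ^ 2) + (∑ j, ∑ k, (N j k) ^ 2)) / 2 := by
        apply div_le_div_of_nonneg_right ?_ (by norm_num) |>.trans_eq rfl
        exact add_le_add hM hN

theorem nuclearNorm_le_of_factorization (m n K : ℕ) (hK : 0 < K)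
    (X : Matrix (Fin m) (Fin n) ℝ)
    (M : Matrix (Fin m) (Fin K) ℝ) (N : Matrix (Fin n) (Fin K) ℝ)
    (hX : X = M * Nᵀ) :
    nuclearNorm X ≤ ((∑ i, ∑ k, (M i k) ^ 2) + (∑ j, ∑ k, (N j k) ^ 2)) / 2 := by
  unfold nuclearNorm
  exact nuclearNorm_le_of_factorization' m n K hK X M N hX
end

section
/- For c > 0 and beta > 0, the integral over x in (0, infinity) of x^(1/2) * exp(-c/(2x) - beta^2 * x / 2) dx equals sqrt(2*pi) * beta^(-3) * (1 + beta * sqrt(c)) * exp(-beta * sqrt(c)). -/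
open MeasureTheory Real Set

noncomputable def phiB (β a t : ℝ) : ℝ := β * t - a / t

lemma phiB_deriv {β a : ℝ} : ∀ t ∈ Ioi (0:ℝ),
    HasDerivWithinAt (phiB β a) (β + a / t ^ 2) (Ioi 0) t := by
  intro t ht
  have ht' : t ≠ 0 := ne_of_gt (mem_Ioi.mp ht)
  have h1 : HasDerivAt (fun t : ℝ => β * t - a / t)
      (β * 1 - (0 * t - a * 1) / t ^ 2) t :=
    ((hasDerivAt_id t).const_mul β).sub ((hasDerivAt_const t a).div (hasDerivAt_id t) ht')
  have h2 : β * 1 - (0 * t - a * 1) / t ^ 2 = β + a / t ^ 2 := by ring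
  rw [h2] at h1
  exact h1.hasDerivWithinAt

lemma phiB_mono {β a : ℝ} (ha : 0 < a) (hβ : 0 < β) : StrictMonoOn (phiB β a) (Ioi 0) := by
  intro s hs t ht hst
  have hs0 : (0:ℝ) < s := mem_Ioi.mp hs
  have : a / t < a / s := div_lt_div_of_pos_left ha hs0 hst
  unfold phiB
  nlinarith

lemma phiB_image {β a : ℝ} (ha : 0 < a) (hβ : 0 < β) : phiB β a '' Ioi 0 = univ := by
  refine eq_univ_of_forall fun u => ?_
  set s := Real.sqrt (u ^ 2 + 4 * a * β) with hs
  have hs2 : s ^ 2 = u ^ 2 + 4 * a * β := Real.sq_sqrt (by positivity)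
  have hsnn : 0 ≤ s := Real.sqrt_nonneg _
  have hsu : -u < s := by nlinarith [mul_pos ha hβ]
  have ht : 0 < (u + s) / (2 * β) := div_pos (by linarith) (by linarith)
  refine ⟨(u + s) / (2 * β), mem_Ioi.mpr ht, ?_⟩
  unfold phiB
  have hus : u + s ≠ 0 := ne_of_gt (by linarith)
  field_simp
  nlinarith [hs2]

lemma gauss_zero : ∫ x : ℝ, Real.exp (-x ^ 2 / 2) = Real.sqrt (2 * π) := by
  have h := integral_gaussian (1/2 : ℝ)
  have h2 : ∀ x : ℝ, -(1/2 : ℝ) * x ^ 2 = -x ^ 2 / 2 := fun x => by ring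
  simp_rw [h2] at h
  rw [h]
  congr 1
  ring

lemma gauss_two : ∫ x : ℝ, x ^ 2 * Real.exp (-x ^ 2 / 2) = Real.sqrt (2 * π) := by
  have h := integral_comp_abs (f := fun t : ℝ => t ^ 2 * Real.exp (-t ^ 2 / 2))
  simp only [sq_abs] at h
  rw [h]
  have h2 : ∫ x in Ioi (0:ℝ), x ^ 2 * Real.exp (-x ^ 2 / 2)
      = ∫ x in Ioi (0:ℝ), x ^ (2:ℝ) * Real.exp (-(1/2) * x ^ (2:ℝ)) := by
    refine setIntegral_congr_fun measurableSet_Ioi fun x hx => ?_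
    have hx0 : (0:ℝ) < x := mem_Ioi.mp hx
    rw [show x ^ (2:ℝ) = x ^ (2:ℕ) by
      rw [← Real.rpow_natCast x 2]; norm_num]
    ring_nf
  rw [h2, integral_rpow_mul_exp_neg_mul_rpow (by norm_num) (by norm_num) (by norm_num)]
  have hG : Real.Gamma ((2 + 1) / 2) = Real.sqrt π / 2 := by
    have : ((2:ℝ) + 1) / 2 = 1/2 + 1 := by norm_num
    rw [this, Real.Gamma_add_one (by norm_num), Real.Gamma_one_half_eq]
    ring
  rw [hG]
  have hpow : (1/2 : ℝ) ^ (-((2:ℝ) + 1) / 2) = 2 * Real.sqrt 2 := by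
    rw [show (-((2:ℝ)+1)/2) = -(3/2) by norm_num, show (1/2:ℝ) = (2:ℝ)⁻¹ by norm_num,
      ← Real.rpow_neg_one (2:ℝ), ← Real.rpow_mul (by norm_num : (0:ℝ) ≤ 2)]
    norm_num
    rw [show (3/2 : ℝ) = 1 + 1/2 by norm_num, Real.rpow_add (by norm_num : (0:ℝ) < 2),
      Real.rpow_one, ← Real.sqrt_eq_rpow]
  rw [hpow, Real.sqrt_mul (by norm_num : (0:ℝ) ≤ 2) π]
  ring

section BesselAux
variable {β a : ℝ}

lemma integral_comp_phiB (ha : 0 < a) (hβ : 0 < β) (h : ℝ → ℝ) :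
    ∫ u, h u = ∫ t in Ioi (0:ℝ), (β + a / t ^ 2) * h (phiB β a t) := by
  have key := integral_image_eq_integral_abs_deriv_smul measurableSet_Ioi
    (phiB_deriv (β := β) (a := a)) ((phiB_mono ha hβ).injOn) h
  rw [phiB_image ha hβ, setIntegral_univ] at key
  rw [key]
  refine setIntegral_congr_fun measurableSet_Ioi fun t ht => ?_
  have ht0 : (0:ℝ) < t := mem_Ioi.mp ht
  have hpos : 0 < β + a / t ^ 2 := by positivity
  rw [smul_eq_mul, abs_of_pos hpos]

-- the symmetry map ψ t = a / (β * t)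
lemma psi_deriv (ha : 0 < a) (hβ : 0 < β) : ∀ t ∈ Ioi (0:ℝ),
    HasDerivWithinAt (fun t => a / (β * t)) (-(a / (β * t ^ 2))) (Ioi 0) t := by
  intro t ht
  have ht0 : (0:ℝ) < t := mem_Ioi.mp ht
  have h1 : HasDerivAt (fun t : ℝ => a / (β * t))
      ((0 * (β * t) - a * (β * 1)) / (β * t) ^ 2) t :=
    (hasDerivAt_const t a).div ((hasDerivAt_id t).const_mul β)
      (by positivity)
  have h2 : (0 * (β * t) - a * (β * 1)) / (β * t) ^ 2 = -(a / (β * t ^ 2)) := by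
    field_simp; ring
  rw [h2] at h1
  exact h1.hasDerivWithinAt

lemma psi_inj (ha : 0 < a) (hβ : 0 < β) : InjOn (fun t => a / (β * t)) (Ioi 0) := by
  intro s hs t ht h
  have hs0 : (0:ℝ) < s := mem_Ioi.mp hs
  have ht0 : (0:ℝ) < t := mem_Ioi.mp ht
  rw [div_eq_div_iff (by positivity) (by positivity)] at h
  have h2 := mul_left_cancel₀ (ne_of_gt ha) h
  have h3 := mul_left_cancel₀ (ne_of_gt hβ) h2
  exact h3.symm

lemma psi_image (ha : 0 < a) (hβ : 0 < β) : (fun t => a / (β * t)) '' Ioi 0 = Ioi 0 := by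
  ext y
  constructor
  · rintro ⟨t, ht, rfl⟩
    exact mem_Ioi.mpr (div_pos ha (mul_pos hβ (mem_Ioi.mp ht)))
  · intro hy
    have hy0 : (0:ℝ) < y := mem_Ioi.mp hy
    exact ⟨a / (β * y), mem_Ioi.mpr (div_pos ha (mul_pos hβ hy0)), by field_simp⟩

lemma integral_comp_psi (ha : 0 < a) (hβ : 0 < β) (g : ℝ → ℝ) :
    ∫ t in Ioi (0:ℝ), g t
      = ∫ t in Ioi (0:ℝ), (a / (β * t ^ 2)) * g (a / (β * t)) := by
  have key := integral_image_eq_integral_abs_deriv_smul measurableSet_Ioi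
    (psi_deriv ha hβ) (psi_inj ha hβ) g
  rw [psi_image ha hβ] at key
  rw [key]
  refine setIntegral_congr_fun measurableSet_Ioi fun t ht => ?_
  have ht0 : (0:ℝ) < t := mem_Ioi.mp ht
  have hpos : 0 < a / (β * t ^ 2) := by positivity
  rw [smul_eq_mul, abs_neg, abs_of_pos hpos]

lemma integrableOn_comp_psi (ha : 0 < a) (hβ : 0 < β) (g : ℝ → ℝ) :
    IntegrableOn g (Ioi 0) ↔
      IntegrableOn (fun t => (a / (β * t ^ 2)) * g (a / (β * t))) (Ioi 0) := by
  have key := integrableOn_image_iff_integrableOn_abs_deriv_smul measurableSet_Ioi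
    (psi_deriv ha hβ) (psi_inj ha hβ) g
  rw [psi_image ha hβ] at key
  rw [key]
  refine integrableOn_congr_fun (fun t ht => ?_) measurableSet_Ioi
  have ht0 : (0:ℝ) < t := mem_Ioi.mp ht
  have hpos : 0 < a / (β * t ^ 2) := by positivity
  rw [smul_eq_mul, abs_neg, abs_of_pos hpos]

lemma phiB_sq (ha : 0 < a) {t : ℝ} (ht : 0 < t) :
    (phiB β a t) ^ 2 = β ^ 2 * t ^ 2 - 2 * a * β + a ^ 2 / t ^ 2 := by
  unfold phiB
  field_simp
  ring

lemma phiB_cont : ContinuousOn (phiB β a) (Ioi 0) := by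
  unfold phiB
  exact (continuous_const.mul continuous_id).continuousOn.sub
    (continuousOn_const.div continuousOn_id fun t ht => ne_of_gt (mem_Ioi.mp ht))

lemma E_cont : ContinuousOn (fun t => Real.exp (-(phiB β a t) ^ 2 / 2)) (Ioi 0) :=
  Real.continuous_exp.comp_continuousOn (((phiB_cont.pow 2).neg).div_const 2)

lemma intB (ha : 0 < a) (hβ : 0 < β) :
    IntegrableOn (fun t => Real.exp (-(phiB β a t) ^ 2 / 2)) (Ioi 0) := by
  have hint : Integrable (fun t : ℝ => Real.exp (a * β) * Real.exp (-(β ^ 2 / 2) * t ^ 2)) :=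
    (integrable_exp_neg_mul_sq (by positivity)).const_mul _
  refine Integrable.mono' hint.integrableOn
    (E_cont.aestronglyMeasurable measurableSet_Ioi) ?_
  refine (ae_restrict_iff' measurableSet_Ioi).mpr (ae_of_all _ fun t ht => ?_)
  have ht0 : (0:ℝ) < t := mem_Ioi.mp ht
  rw [Real.norm_eq_abs, abs_of_pos (Real.exp_pos _), ← Real.exp_add]
  apply Real.exp_le_exp.mpr
  have hsq := phiB_sq (β := β) ha ht0
  have h0 : 0 ≤ a ^ 2 / t ^ 2 := by positivity
  nlinarith

lemma intA (ha : 0 < a) (hβ : 0 < β) :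
    IntegrableOn (fun t => t ^ 2 * Real.exp (-(phiB β a t) ^ 2 / 2)) (Ioi 0) := by
  have hint : IntegrableOn (fun t : ℝ =>
      Real.exp (a * β) * (t ^ (2:ℝ) * Real.exp (-(β ^ 2 / 2) * t ^ 2))) (Ioi 0) :=
    ((integrableOn_rpow_mul_exp_neg_mul_sq (by positivity)
      (by norm_num : (-1:ℝ) < 2)).const_mul _)
  refine Integrable.mono' hint
    ((continuousOn_id.pow 2 |>.mul E_cont).aestronglyMeasurable measurableSet_Ioi) ?_
  refine (ae_restrict_iff' measurableSet_Ioi).mpr (ae_of_all _ fun t ht => ?_)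
  have ht0 : (0:ℝ) < t := mem_Ioi.mp ht
  have habs : t ^ (2:ℝ) = t ^ 2 := by
    rw [show (2:ℝ) = ((2:ℕ):ℝ) by norm_num, Real.rpow_natCast]
  rw [Real.norm_eq_abs, habs, abs_of_pos (by positivity), ← mul_assoc,
    mul_comm (Real.exp (a*β)) (t^2), mul_assoc]
  apply mul_le_mul_of_nonneg_left ?_ (by positivity)
  rw [← Real.exp_add]
  apply Real.exp_le_exp.mpr
  have hsq := phiB_sq (β := β) ha ht0
  have h0 : 0 ≤ a ^ 2 / t ^ 2 := by positivity
  nlinarith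

lemma phiB_psi (ha : 0 < a) (hβ : 0 < β) {t : ℝ} (ht : 0 < t) :
    phiB β a (a / (β * t)) = -(phiB β a t) := by
  unfold phiB
  field_simp
  ring

lemma intC (ha : 0 < a) (hβ : 0 < β) :
    IntegrableOn (fun t => Real.exp (-(phiB β a t) ^ 2 / 2) / t ^ 2) (Ioi 0) := by
  have h := (integrableOn_comp_psi ha hβ
    (fun t => Real.exp (-(phiB β a t) ^ 2 / 2))).mp (intB ha hβ)
  have h2 := h.const_mul (β / a)
  refine IntegrableOn.congr_fun h2 (fun t ht => ?_) measurableSet_Ioi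
  have ht0 : (0:ℝ) < t := mem_Ioi.mp ht
  rw [phiB_psi ha hβ ht0, neg_sq]
  field_simp

lemma intD (ha : 0 < a) (hβ : 0 < β) :
    IntegrableOn (fun t => Real.exp (-(phiB β a t) ^ 2 / 2) / t ^ 4) (Ioi 0) := by
  have h := (integrableOn_comp_psi ha hβ
    (fun t => t ^ 2 * Real.exp (-(phiB β a t) ^ 2 / 2))).mp (intA ha hβ)
  have h2 := h.const_mul (β ^ 3 / a ^ 3)
  refine IntegrableOn.congr_fun h2 (fun t ht => ?_) measurableSet_Ioi
  have ht0 : (0:ℝ) < t := mem_Ioi.mp ht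
  rw [phiB_psi ha hβ ht0, neg_sq]
  field_simp

lemma keyA (ha : 0 < a) (hβ : 0 < β) :
    ∫ t in Ioi (0:ℝ), t ^ 2 * Real.exp (-(phiB β a t) ^ 2 / 2)
      = Real.sqrt (2 * π) * (1 + a * β) / (2 * β ^ 3) := by
  set E : ℝ → ℝ := fun t => Real.exp (-(phiB β a t) ^ 2 / 2) with hE
  set A := ∫ t in Ioi (0:ℝ), t ^ 2 * E t with hA
  set B := ∫ t in Ioi (0:ℝ), E t with hB
  set C := ∫ t in Ioi (0:ℝ), E t / t ^ 2 with hC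
  set D := ∫ t in Ioi (0:ℝ), E t / t ^ 4 with hD
  have haD : A = (a ^ 3 / β ^ 3) * D := by
    calc A = ∫ t in Ioi (0:ℝ), (a / (β * t ^ 2))
          * ((a / (β * t)) ^ 2 * E (a / (β * t))) :=
        integral_comp_psi ha hβ (fun t => t ^ 2 * E t)
    _ = ∫ t in Ioi (0:ℝ), (a ^ 3 / β ^ 3) * (E t / t ^ 4) := by
        refine setIntegral_congr_fun measurableSet_Ioi fun t ht => ?_
        have ht0 : (0:ℝ) < t := mem_Ioi.mp ht
        simp only [hE]
        rw [phiB_psi ha hβ ht0, neg_sq]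
        field_simp
    _ = (a ^ 3 / β ^ 3) * D := integral_const_mul _ _
  have heq1 : Real.sqrt (2 * π) = β * B + a * C := by
    calc Real.sqrt (2 * π) = ∫ u, Real.exp (-u ^ 2 / 2) := gauss_zero.symm
    _ = ∫ t in Ioi (0:ℝ), (β + a / t ^ 2) * Real.exp (-(phiB β a t) ^ 2 / 2) :=
        integral_comp_phiB ha hβ (fun u => Real.exp (-u ^ 2 / 2))
    _ = ∫ t in Ioi (0:ℝ), (β * E t + a * (E t / t ^ 2)) := by
        refine setIntegral_congr_fun measurableSet_Ioi fun t ht => ?_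
        have ht0 : (0:ℝ) < t := mem_Ioi.mp ht
        simp only [hE]
        field_simp
    _ = β * B + a * C := by
        rw [integral_add ((intB ha hβ).const_mul β) ((intC ha hβ).const_mul a),
          integral_const_mul, integral_const_mul]
  have heq2 : Real.sqrt (2 * π)
      = β ^ 3 * A - a * β ^ 2 * B - a ^ 2 * β * C + a ^ 3 * D := by
    calc Real.sqrt (2 * π) = ∫ u, u ^ 2 * Real.exp (-u ^ 2 / 2) := gauss_two.symm
    _ = ∫ t in Ioi (0:ℝ), (β + a / t ^ 2)
          * ((phiB β a t) ^ 2 * Real.exp (-(phiB β a t) ^ 2 / 2)) :=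
        integral_comp_phiB ha hβ (fun u => u ^ 2 * Real.exp (-u ^ 2 / 2))
    _ = ∫ t in Ioi (0:ℝ), (β ^ 3 * (t ^ 2 * E t) - a * β ^ 2 * E t
          - a ^ 2 * β * (E t / t ^ 2) + a ^ 3 * (E t / t ^ 4)) := by
        refine setIntegral_congr_fun measurableSet_Ioi fun t ht => ?_
        have ht0 : (0:ℝ) < t := mem_Ioi.mp ht
        simp only [hE]
        set G := Real.exp (-(phiB β a t) ^ 2 / 2) with hG
        rw [phiB_sq (β := β) ha ht0]
        field_simp
        ring
    _ = β ^ 3 * A - a * β ^ 2 * B - a ^ 2 * β * C + a ^ 3 * D := by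
        have i1 : IntegrableOn (fun t => β ^ 3 * (t ^ 2 * E t)) (Ioi 0) :=
          (intA ha hβ).const_mul _
        have i2 : IntegrableOn (fun t => a * β ^ 2 * E t) (Ioi 0) :=
          (intB ha hβ).const_mul _
        have i3 : IntegrableOn (fun t => a ^ 2 * β * (E t / t ^ 2)) (Ioi 0) :=
          (intC ha hβ).const_mul _
        have i4 : IntegrableOn (fun t => a ^ 3 * (E t / t ^ 4)) (Ioi 0) :=
          (intD ha hβ).const_mul _
        have i12 : IntegrableOn (fun t => β ^ 3 * (t ^ 2 * E t) - a * β ^ 2 * E t)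
            (Ioi 0) := i1.sub i2
        have i123 : IntegrableOn (fun t => β ^ 3 * (t ^ 2 * E t) - a * β ^ 2 * E t
            - a ^ 2 * β * (E t / t ^ 2)) (Ioi 0) := i12.sub i3
        rw [integral_add i123 i4, integral_sub i12 i3,
          integral_sub i1 i2, integral_const_mul, integral_const_mul,
          integral_const_mul, integral_const_mul]
  have haD' : a ^ 3 * D = β ^ 3 * A := by
    rw [haD]; field_simp
  rw [eq_div_iff (by positivity : (2:ℝ) * β ^ 3 ≠ 0)]
  linear_combination -heq2 - haD' - a * β * heq1

end BesselAux

theorem bessel_integral_three_halves (c β : ℝ) (hc : 0 < c) (hβ : 0 < β) :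
    ∫ x in Set.Ioi (0 : ℝ), Real.sqrt x * Real.exp (-c / (2 * x) - β ^ 2 * x / 2)
      = Real.sqrt (2 * Real.pi) / β ^ 3 *
          ((1 + β * Real.sqrt c) * Real.exp (-(β * Real.sqrt c))) := by
  set a := Real.sqrt c with haDef
  have ha : 0 < a := Real.sqrt_pos.mpr hc
  have ha2 : a ^ 2 = c := Real.sq_sqrt hc.le
  have hstep1 : ∀ x ∈ Ioi (0:ℝ),
      Real.sqrt x * Real.exp (-c / (2 * x) - β ^ 2 * x / 2)
        = Real.exp (-(a * β))
            * (Real.sqrt x * Real.exp (-(phiB β a (Real.sqrt x)) ^ 2 / 2)) := by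
    intro x hx
    have hx0 : (0:ℝ) < x := mem_Ioi.mp hx
    have hsx0 : 0 < Real.sqrt x := Real.sqrt_pos.mpr hx0
    have hsx : Real.sqrt x ^ 2 = x := Real.sq_sqrt hx0.le
    have hexp : -c / (2 * x) - β ^ 2 * x / 2
        = -(a * β) + (-(phiB β a (Real.sqrt x)) ^ 2 / 2) := by
      rw [phiB_sq ha hsx0, hsx, ← ha2]
      field_simp
      ring
    rw [hexp, Real.exp_add]
    ring
  rw [setIntegral_congr_fun measurableSet_Ioi hstep1, integral_const_mul]
  have hsub : ∫ x in Ioi (0:ℝ),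
      Real.sqrt x * Real.exp (-(phiB β a (Real.sqrt x)) ^ 2 / 2)
        = ∫ t in Ioi (0:ℝ), 2 * (t ^ 2 * Real.exp (-(phiB β a t) ^ 2 / 2)) := by
    rw [← integral_comp_rpow_Ioi_of_pos
      (g := fun x => Real.sqrt x * Real.exp (-(phiB β a (Real.sqrt x)) ^ 2 / 2))
      (p := 2) (by norm_num)]
    refine setIntegral_congr_fun measurableSet_Ioi fun t ht => ?_
    have ht0 : (0:ℝ) < t := mem_Ioi.mp ht
    have h1 : t ^ ((2:ℝ)) = t ^ 2 := by
      rw [show (2:ℝ) = ((2:ℕ):ℝ) by norm_num, Real.rpow_natCast]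
    have h2 : t ^ ((2:ℝ) - 1) = t := by
      norm_num
    rw [smul_eq_mul, h2, h1, Real.sqrt_sq ht0.le]
    ring
  rw [hsub, integral_const_mul, keyA ha hβ, mul_comm a β]
  field_simp
end

section
/- For c >= 0 and beta > 0, the integral over x in (0, infinity) of x^(-1/2) * exp(-c/(2x) - beta^2 * x/2) dx equals sqrt(2*pi) / beta * exp(-beta * sqrt(c)). -/
open MeasureTheory Set Real

-- derivative of the main substitution
lemma pc_hasDerivAt (β s x : ℝ) (hx : 0 < x) :
    HasDerivAt (fun x : ℝ => β * Real.sqrt x - s * (Real.sqrt x)⁻¹)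
      (β / (2 * Real.sqrt x) + s / (2 * x * Real.sqrt x)) x := by
  have hsx : 0 < Real.sqrt x := Real.sqrt_pos.mpr hx
  have h1 := (Real.hasDerivAt_sqrt hx.ne').const_mul β
  have h2 := ((Real.hasDerivAt_sqrt hx.ne').inv hsx.ne').const_mul s
  have := h1.sub h2
  refine this.congr_deriv ?_
  have hq : Real.sqrt x ^ 2 = x := Real.sq_sqrt hx.le
  field_simp
  rw [hq]
  ring

-- image of the main substitution is all of ℝ (when s > 0)
lemma pc_image (β s : ℝ) (hβ : 0 < β) (hs : 0 < s) :
    (fun x : ℝ => β * Real.sqrt x - s * (Real.sqrt x)⁻¹) '' Ioi 0 = univ := by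
  apply eq_univ_of_forall
  intro u
  set D := Real.sqrt (u ^ 2 + 4 * β * s) with hD
  have hD2 : D ^ 2 = u ^ 2 + 4 * β * s := Real.sq_sqrt (by positivity)
  have hDu : -u < D := by
    nlinarith [Real.sqrt_nonneg (u ^ 2 + 4 * β * s), hD2]
  set t := (u + D) / (2 * β) with ht
  have htpos : 0 < t := by
    apply div_pos _ (by positivity); linarith
  refine ⟨t ^ 2, mem_Ioi.mpr (by positivity), ?_⟩
  have hst : Real.sqrt (t ^ 2) = t := Real.sqrt_sq htpos.le
  simp only [hst]
  have hq : β * t ^ 2 = u * t + s := by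
    rw [ht]
    field_simp
    nlinarith [hD2]
  field_simp
  nlinarith [hq]

-- image of the reflection substitution
lemma pc_image2 (a : ℝ) (ha : 0 < a) :
    (fun x : ℝ => a / x) '' Ioi 0 = Ioi 0 := by
  ext u
  simp only [mem_image, mem_Ioi]
  constructor
  · rintro ⟨x, hx, rfl⟩; positivity
  · intro hu
    refine ⟨a / u, (by positivity), ?_⟩
    field_simp

lemma pc_inj2 (a : ℝ) (ha : 0 < a) : InjOn (fun x : ℝ => a / x) (Ioi 0) := by
  intro x hx y hy h
  simp only [mem_Ioi] at hx hy
  field_simp at h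
  exact h.symm

lemma pc_strictMono (β s : ℝ) (hβ : 0 < β) (hs : 0 ≤ s) :
    StrictMonoOn (fun x : ℝ => β * Real.sqrt x - s * (Real.sqrt x)⁻¹) (Ioi 0) := by
  intro x hx y hy hxy
  simp only [mem_Ioi] at hx hy
  have h1 : Real.sqrt x < Real.sqrt y := Real.sqrt_lt_sqrt hx.le hxy
  have hx' : 0 < Real.sqrt x := Real.sqrt_pos.mpr hx
  have hy' : 0 < Real.sqrt y := Real.sqrt_pos.mpr hy
  have h2 : (Real.sqrt y)⁻¹ ≤ (Real.sqrt x)⁻¹ := by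
    apply inv_anti₀ hx' h1.le
  have : β * Real.sqrt x < β * Real.sqrt y := by nlinarith
  have : s * (Real.sqrt y)⁻¹ ≤ s * (Real.sqrt x)⁻¹ := by nlinarith [inv_pos.mpr hy']
  simp only []
  linarith

lemma pc_hasDerivAt2 (a y : ℝ) (hy : 0 < y) :
    HasDerivAt (fun y : ℝ => a / y) (-(a / y ^ 2)) y := by
  have h := (hasDerivAt_inv hy.ne').const_mul a
  have h2 : (fun y : ℝ => a / y) = fun y : ℝ => a * y⁻¹ := by
    funext z; exact div_eq_mul_inv a z
  rw [h2]
  refine h.congr_deriv ?_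
  field_simp

lemma pc_image0 (β : ℝ) (hβ : 0 < β) :
    (fun x : ℝ => β * Real.sqrt x - 0 * (Real.sqrt x)⁻¹) '' Ioi 0 = Ioi 0 := by
  ext u
  simp only [mem_image, mem_Ioi, zero_mul, sub_zero]
  constructor
  · rintro ⟨x, hx, rfl⟩
    exact mul_pos hβ (Real.sqrt_pos.mpr hx)
  · intro hu
    refine ⟨(u / β) ^ 2, by positivity, ?_⟩
    rw [Real.sqrt_sq (by positivity)]
    field_simp

lemma pc_gauss : ∫ u : ℝ, Real.exp (-(u ^ 2) / 2) = Real.sqrt (2 * Real.pi) := by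
  have h := integral_gaussian (1 / 2 : ℝ)
  rw [show (Real.pi / (1 / 2 : ℝ)) = 2 * Real.pi by ring] at h
  rw [← h]
  congr 1
  funext u
  congr 1
  ring

lemma pc_gauss_int : Integrable (fun u : ℝ => Real.exp (-(u ^ 2) / 2)) := by
  have h : (fun u : ℝ => Real.exp (-(u ^ 2) / 2)) = fun u => Real.exp (-(1/2 : ℝ) * u ^ 2) := by
    funext u; congr 1; ring
  rw [h]
  exact integrable_exp_neg_mul_sq (by norm_num)

lemma pc_gauss_Ioi : ∫ u in Ioi (0 : ℝ), Real.exp (-(u ^ 2) / 2) = Real.sqrt (2 * Real.pi) / 2 := by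
  have hfun : (fun u : ℝ => Real.exp (-(u ^ 2) / 2)) = fun u => Real.exp (-(1 / 2 : ℝ) * u ^ 2) := by
    funext u; congr 1; ring
  rw [hfun, integral_gaussian_Ioi, show (Real.pi / (1 / 2 : ℝ)) = 2 * Real.pi by ring]

lemma pc_alg1 (β s q : ℝ) (hq : q ≠ 0) :
    -((β * q - s * q⁻¹) ^ 2) / 2 = β * s + (-(s ^ 2) / (2 * q ^ 2) - β ^ 2 * q ^ 2 / 2) := by
  field_simp
  ring

lemma pc_pointwise (c β s x : ℝ) (hβ : 0 < β) (hs : 0 < s) (hs2 : s ^ 2 = c) (hx : 0 < x) :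
    |β / (2 * Real.sqrt x) + s / (2 * x * Real.sqrt x)| •
        Real.exp (-((β * Real.sqrt x - s * (Real.sqrt x)⁻¹) ^ 2) / 2)
      = Real.exp (β * s) * ((β / 2) * ((Real.sqrt x)⁻¹ * Real.exp (-c / (2 * x) - β ^ 2 * x / 2))
          + (s / 2) * ((x * Real.sqrt x)⁻¹ * Real.exp (-c / (2 * x) - β ^ 2 * x / 2))) := by
  subst hs2
  obtain ⟨q, hq0, rfl⟩ : ∃ q : ℝ, 0 < q ∧ q ^ 2 = x :=
    ⟨Real.sqrt x, Real.sqrt_pos.mpr hx, Real.sq_sqrt hx.le⟩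
  rw [Real.sqrt_sq hq0.le]
  have hexp : -((β * q - s * q⁻¹) ^ 2) / 2
      = β * s + (-s ^ 2 / (2 * q ^ 2) - β ^ 2 * q ^ 2 / 2) := by
    rw [pc_alg1 β s q hq0.ne']
  rw [abs_of_pos (by positivity), hexp, Real.exp_add, smul_eq_mul]
  field_simp

lemma pc_reflect (c β s y : ℝ) (hβ : 0 < β) (hs : 0 < s) (hs2 : s ^ 2 = c) (hy : 0 < y) :
    |(-(c / β ^ 2 / y ^ 2))| •
        ((s / 2) * (((c / β ^ 2 / y) * Real.sqrt (c / β ^ 2 / y))⁻¹ *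
          Real.exp (-c / (2 * (c / β ^ 2 / y)) - β ^ 2 * (c / β ^ 2 / y) / 2)))
      = (β / 2) * ((Real.sqrt y)⁻¹ * Real.exp (-c / (2 * y) - β ^ 2 * y / 2)) := by
  subst hs2
  obtain ⟨q, hq0, rfl⟩ : ∃ q : ℝ, 0 < q ∧ q ^ 2 = y :=
    ⟨Real.sqrt y, Real.sqrt_pos.mpr hy, Real.sq_sqrt hy.le⟩
  rw [Real.sqrt_sq hq0.le]
  have hsqrt : Real.sqrt (s ^ 2 / β ^ 2 / q ^ 2) = s / (β * q) := by
    rw [show s ^ 2 / β ^ 2 / q ^ 2 = (s / (β * q)) ^ 2 by rw [div_pow, mul_pow]; ring]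
    exact Real.sqrt_sq (by positivity)
  have hE : -s ^ 2 / (2 * (s ^ 2 / β ^ 2 / q ^ 2)) - β ^ 2 * (s ^ 2 / β ^ 2 / q ^ 2) / 2
      = -s ^ 2 / (2 * q ^ 2) - β ^ 2 * q ^ 2 / 2 := by
    field_simp
    ring
  rw [hsqrt, hE, abs_neg, abs_of_pos (by positivity), smul_eq_mul]
  field_simp

theorem park_casella_identity (c β : ℝ) (hc : 0 ≤ c) (hβ : 0 < β) :
    ∫ x in Set.Ioi (0 : ℝ), (Real.sqrt x)⁻¹ * Real.exp (-c / (2 * x) - β ^ 2 * x / 2)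
      = Real.sqrt (2 * Real.pi) / β * Real.exp (-(β * Real.sqrt c)) := by
  rcases eq_or_lt_of_le hc with hc0 | hcpos
  · -- case c = 0
    subst hc0
    rw [Real.sqrt_zero, mul_zero, neg_zero, Real.exp_zero, mul_one]
    have hderiv : ∀ x ∈ Ioi (0 : ℝ),
        HasDerivWithinAt (fun x : ℝ => β * Real.sqrt x - 0 * (Real.sqrt x)⁻¹)
          (β / (2 * Real.sqrt x) + 0 / (2 * x * Real.sqrt x)) (Ioi 0) x :=
      fun x hx => (pc_hasDerivAt β 0 x hx).hasDerivWithinAt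
    have hinj := (pc_strictMono β 0 hβ le_rfl).injOn
    have key := integral_image_eq_integral_abs_deriv_smul measurableSet_Ioi hderiv hinj
      (fun u => Real.exp (-(u ^ 2) / 2))
    rw [pc_image0 β hβ, pc_gauss_Ioi] at key
    have key2 : (∫ x in Ioi (0 : ℝ),
        |β / (2 * Real.sqrt x) + 0 / (2 * x * Real.sqrt x)| •
          Real.exp (-((β * Real.sqrt x - 0 * (Real.sqrt x)⁻¹) ^ 2) / 2))
        = ∫ x in Ioi (0 : ℝ),
            (β / 2) * ((Real.sqrt x)⁻¹ * Real.exp (-0 / (2 * x) - β ^ 2 * x / 2)) := by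
      apply integral_congr_ae
      filter_upwards [self_mem_ae_restrict (measurableSet_Ioi : MeasurableSet (Ioi (0:ℝ)))]
        with x hx
      have hx0 : (0:ℝ) < x := hx
      have hq0 : 0 < Real.sqrt x := Real.sqrt_pos.mpr hx0
      have hq : Real.sqrt x ^ 2 = x := Real.sq_sqrt hx0.le
      rw [smul_eq_mul,
        show -((β * Real.sqrt x - 0 * (Real.sqrt x)⁻¹) ^ 2) / 2 = -0 / (2 * x) - β ^ 2 * x / 2 by
          rw [zero_mul, sub_zero, mul_pow, hq]; ring,
        abs_of_pos (by positivity)]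
      field_simp
      ring
    rw [key2, integral_const_mul] at key
    have h2pi : (0:ℝ) ≤ 2 * Real.pi := by positivity
    field_simp at key ⊢
    linarith [key]
  · -- case c > 0
    have hs : 0 < Real.sqrt c := Real.sqrt_pos.mpr hcpos
    have hs2 : Real.sqrt c ^ 2 = c := Real.sq_sqrt hc
    set s := Real.sqrt c with hsdef
    have hderiv : ∀ x ∈ Ioi (0 : ℝ),
        HasDerivWithinAt (fun x : ℝ => β * Real.sqrt x - s * (Real.sqrt x)⁻¹)
          (β / (2 * Real.sqrt x) + s / (2 * x * Real.sqrt x)) (Ioi 0) x :=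
      fun x hx => (pc_hasDerivAt β s x hx).hasDerivWithinAt
    have hinj := (pc_strictMono β s hβ hs.le).injOn
    have key := integral_image_eq_integral_abs_deriv_smul measurableSet_Ioi hderiv hinj
      (fun u => Real.exp (-(u ^ 2) / 2))
    rw [pc_image β s hβ hs, setIntegral_univ, pc_gauss] at key
    -- pointwise rewriting of the substituted integrand
    have key2 : (∫ x in Ioi (0 : ℝ),
        |β / (2 * Real.sqrt x) + s / (2 * x * Real.sqrt x)| •
          Real.exp (-((β * Real.sqrt x - s * (Real.sqrt x)⁻¹) ^ 2) / 2))
        = ∫ x in Ioi (0 : ℝ), Real.exp (β * s) *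
            ((β / 2) * ((Real.sqrt x)⁻¹ * Real.exp (-c / (2 * x) - β ^ 2 * x / 2))
              + (s / 2) * ((x * Real.sqrt x)⁻¹ * Real.exp (-c / (2 * x) - β ^ 2 * x / 2))) := by
      apply integral_congr_ae
      filter_upwards [self_mem_ae_restrict (measurableSet_Ioi : MeasurableSet (Ioi (0:ℝ)))]
        with x hx
      exact pc_pointwise c β s x hβ hs hs2 hx
    rw [key2] at key
    -- integrability
    have hFint : IntegrableOn (fun x =>
        |β / (2 * Real.sqrt x) + s / (2 * x * Real.sqrt x)| •
          Real.exp (-((β * Real.sqrt x - s * (Real.sqrt x)⁻¹) ^ 2) / 2)) (Ioi 0) := by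
      have himg : IntegrableOn (fun u => Real.exp (-(u ^ 2) / 2))
          ((fun x : ℝ => β * Real.sqrt x - s * (Real.sqrt x)⁻¹) '' Ioi 0) := by
        rw [pc_image β s hβ hs, integrableOn_univ]
        exact pc_gauss_int
      exact (integrableOn_image_iff_integrableOn_abs_deriv_smul measurableSet_Ioi hderiv hinj
        (fun u => Real.exp (-(u ^ 2) / 2))).mp himg
    have hGint : IntegrableOn (fun x => Real.exp (β * s) *
        ((β / 2) * ((Real.sqrt x)⁻¹ * Real.exp (-c / (2 * x) - β ^ 2 * x / 2))
          + (s / 2) * ((x * Real.sqrt x)⁻¹ * Real.exp (-c / (2 * x) - β ^ 2 * x / 2)))) (Ioi 0) :=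
      hFint.congr_fun (fun x hx => pc_pointwise c β s x hβ hs hs2 hx) measurableSet_Ioi
    have hsum : IntegrableOn (fun x =>
        (β / 2) * ((Real.sqrt x)⁻¹ * Real.exp (-c / (2 * x) - β ^ 2 * x / 2))
          + (s / 2) * ((x * Real.sqrt x)⁻¹ * Real.exp (-c / (2 * x) - β ^ 2 * x / 2))) (Ioi 0) := by
      have h := hGint.const_mul (Real.exp (β * s))⁻¹
      have heq : (fun x => (Real.exp (β * s))⁻¹ * (Real.exp (β * s) *
          ((β / 2) * ((Real.sqrt x)⁻¹ * Real.exp (-c / (2 * x) - β ^ 2 * x / 2))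
            + (s / 2) * ((x * Real.sqrt x)⁻¹ * Real.exp (-c / (2 * x) - β ^ 2 * x / 2)))))
          = fun x => (β / 2) * ((Real.sqrt x)⁻¹ * Real.exp (-c / (2 * x) - β ^ 2 * x / 2))
            + (s / 2) * ((x * Real.sqrt x)⁻¹ * Real.exp (-c / (2 * x) - β ^ 2 * x / 2)) := by
        funext x
        rw [← mul_assoc, inv_mul_cancel₀ (Real.exp_ne_zero _), one_mul]
      rwa [heq] at h
    have hEmeas : Measurable fun x : ℝ => Real.exp (-c / (2 * x) - β ^ 2 * x / 2) := by
      apply Real.measurable_exp.comp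
      exact (measurable_const.div (measurable_const.mul measurable_id)).sub
        ((measurable_const.mul measurable_id).div measurable_const)
    have ht1meas : AEStronglyMeasurable
        (fun x => (β / 2) * ((Real.sqrt x)⁻¹ * Real.exp (-c / (2 * x) - β ^ 2 * x / 2)))
        (volume.restrict (Ioi 0)) :=
      (((Real.continuous_sqrt.measurable.inv).mul hEmeas).const_mul (β / 2)).aestronglyMeasurable
    have ht2meas : AEStronglyMeasurable
        (fun x => (s / 2) * ((x * Real.sqrt x)⁻¹ * Real.exp (-c / (2 * x) - β ^ 2 * x / 2)))
        (volume.restrict (Ioi 0)) :=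
      ((((measurable_id.mul Real.continuous_sqrt.measurable).inv).mul hEmeas).const_mul
        (s / 2)).aestronglyMeasurable
    have ht1 : IntegrableOn
        (fun x => (β / 2) * ((Real.sqrt x)⁻¹ * Real.exp (-c / (2 * x) - β ^ 2 * x / 2)))
        (Ioi 0) := by
      apply Integrable.mono hsum ht1meas
      filter_upwards [self_mem_ae_restrict (measurableSet_Ioi : MeasurableSet (Ioi (0:ℝ)))]
        with x hx
      have hx0 : (0:ℝ) < x := hx
      have h1 : (0:ℝ) ≤ (β / 2) * ((Real.sqrt x)⁻¹ * Real.exp (-c / (2 * x) - β ^ 2 * x / 2)) := by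
        positivity
      have hxx : (0:ℝ) < x * Real.sqrt x := mul_pos hx0 (Real.sqrt_pos.mpr hx0)
      have h2 : (0:ℝ) ≤ (s / 2) * ((x * Real.sqrt x)⁻¹ * Real.exp (-c / (2 * x) - β ^ 2 * x / 2)) :=
        mul_nonneg (by positivity) (mul_nonneg (inv_nonneg.mpr hxx.le) (Real.exp_pos _).le)
      rw [Real.norm_eq_abs, Real.norm_eq_abs, abs_of_nonneg h1, abs_of_nonneg (by linarith)]
      linarith
    have ht2 : IntegrableOn
        (fun x => (s / 2) * ((x * Real.sqrt x)⁻¹ * Real.exp (-c / (2 * x) - β ^ 2 * x / 2)))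
        (Ioi 0) := by
      apply Integrable.mono hsum ht2meas
      filter_upwards [self_mem_ae_restrict (measurableSet_Ioi : MeasurableSet (Ioi (0:ℝ)))]
        with x hx
      have hx0 : (0:ℝ) < x := hx
      have h1 : (0:ℝ) ≤ (β / 2) * ((Real.sqrt x)⁻¹ * Real.exp (-c / (2 * x) - β ^ 2 * x / 2)) := by
        positivity
      have hxx : (0:ℝ) < x * Real.sqrt x := mul_pos hx0 (Real.sqrt_pos.mpr hx0)
      have h2 : (0:ℝ) ≤ (s / 2) * ((x * Real.sqrt x)⁻¹ * Real.exp (-c / (2 * x) - β ^ 2 * x / 2)) :=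
        mul_nonneg (by positivity) (mul_nonneg (inv_nonneg.mpr hxx.le) (Real.exp_pos _).le)
      rw [Real.norm_eq_abs, Real.norm_eq_abs, abs_of_nonneg h2, abs_of_nonneg (by linarith)]
      linarith
    -- reflection substitution
    have hderiv2 : ∀ y ∈ Ioi (0 : ℝ),
        HasDerivWithinAt (fun y : ℝ => c / β ^ 2 / y) (-(c / β ^ 2 / y ^ 2)) (Ioi 0) y :=
      fun y hy => (pc_hasDerivAt2 (c / β ^ 2) y hy).hasDerivWithinAt
    have hrefl := integral_image_eq_integral_abs_deriv_smul measurableSet_Ioi hderiv2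
      (pc_inj2 (c / β ^ 2) (by positivity))
      (fun x => (s / 2) * ((x * Real.sqrt x)⁻¹ * Real.exp (-c / (2 * x) - β ^ 2 * x / 2)))
    rw [pc_image2 (c / β ^ 2) (by positivity)] at hrefl
    have hrefl2 : (∫ y in Ioi (0 : ℝ), |(-(c / β ^ 2 / y ^ 2))| •
        ((s / 2) * (((c / β ^ 2 / y) * Real.sqrt (c / β ^ 2 / y))⁻¹ *
          Real.exp (-c / (2 * (c / β ^ 2 / y)) - β ^ 2 * (c / β ^ 2 / y) / 2))))
        = ∫ y in Ioi (0 : ℝ),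
            (β / 2) * ((Real.sqrt y)⁻¹ * Real.exp (-c / (2 * y) - β ^ 2 * y / 2)) := by
      apply integral_congr_ae
      filter_upwards [self_mem_ae_restrict (measurableSet_Ioi : MeasurableSet (Ioi (0:ℝ)))]
        with y hy
      exact pc_reflect c β s y hβ hs hs2 hy
    rw [hrefl2] at hrefl
    -- combine everything
    rw [integral_const_mul, integral_add ht1 ht2, hrefl, integral_const_mul] at key
    -- key : √(2π) = exp (β s) * (β/2 * I + β/2 * I)
    rw [Real.exp_neg]
    have hepos := Real.exp_pos (β * s)
    field_simp at key ⊢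
    ring_nf at key ⊢
    linarith [key]
end
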